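/- The simplex generating polynomials satisfy the Jacobsthal recursion: for all real t, f_{G_n}(t) = f_{G_{n-1}}(t) + t·f_{G_{n-2}}(t) for every n ≥ 5, and f_{G_n^+}(t) = f_{G_{n-1}^+}(t) + t·f_{G_{n-2}^+}(t) for every n ≥ 3. -/

import Mathlib

/-- The cycle graph `C_n` on `Fin n`: `i ~ j` iff `i - j ≡ ±1 (mod n)`. -/
def cycleGraph (n : ℕ) : SimpleGraph (Fin n) where
  Adj i j := i ≠ j ∧ ((i - j : Fin n).val = 1 ∨ (j - i : Fin n).val = 1)
  symm := by
    constructor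
    intro i j h
    exact ⟨h.1.symm, h.2.symm⟩
  loopless := by
    constructor
    intro i h
    exact h.1 rfl

instance (n : ℕ) : DecidableRel (cycleGraph n).Adj :=
  fun a b => inferInstanceAs (Decidable (a ≠ b ∧ ((a - b : Fin n).val = 1 ∨ (b - a : Fin n).val = 1)))

/-- The path graph `P_n` on `Fin n`: `i ~ j` iff `|i - j| = 1`. -/
def pathGraph' (n : ℕ) : SimpleGraph (Fin n) where
  Adj i j := (i : ℕ) + 1 = (j : ℕ) ∨ (j : ℕ) + 1 = (i : ℕ)
  symm := by
    constructor
    intro i j h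
    exact h.symm
  loopless := by
    constructor
    intro i h
    rcases h with h | h <;> omega

instance (n : ℕ) : DecidableRel (pathGraph' n).Adj :=
  fun a b => inferInstanceAs (Decidable ((a : ℕ) + 1 = (b : ℕ) ∨ (b : ℕ) + 1 = (a : ℕ)))

/-- The finset of all nonempty cliques of a finite simple graph. -/
noncomputable def cliquesOf {V : Type*} [Finite V] (G : SimpleGraph V) : Finset (Finset V) := by
  classical
  letI : Fintype V := Fintype.ofFinite V
  exact Finset.univ.filter (fun s : Finset V => s.Nonempty ∧ G.IsClique (s : Set V))

/-- The number of cliques with exactly `j` elements (the empty clique counting for `j = 0`). -/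
noncomputable def cliqueCount {V : Type*} [Finite V] (G : SimpleGraph V) (j : ℕ) : ℕ := by
  classical
  letI : Fintype V := Fintype.ofFinite V
  exact (Finset.univ.filter (fun s : Finset V => G.IsClique (s : Set V) ∧ s.card = j)).card

/-- The Euler characteristic of the clique (Whitney) complex of `G`. -/
noncomputable def eulerChar {V : Type*} [Finite V] (G : SimpleGraph V) : ℤ :=
  ∑ c ∈ cliquesOf G, (-1 : ℤ) ^ (c.card + 1)

/-- The simplex generating function `f_G(t) = 1 + ∑_c t^{|c|}`. -/
noncomputable def fgen {V : Type*} [Finite V] (G : SimpleGraph V) (t : ℝ) : ℝ :=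
  1 + ∑ c ∈ cliquesOf G, t ^ c.card


open Finset

/-- Independence condition for a path: no two consecutive naturals. -/
def okP (s : Finset ℕ) : Prop := ∀ a ∈ s, a + 1 ∉ s

instance : DecidablePred okP := fun s => inferInstanceAs (Decidable (∀ a ∈ s, a + 1 ∉ s))

/-- Independence in the cycle on `{0,…,n-1}`. -/
def okC (n : ℕ) (s : Finset ℕ) : Prop := okP s ∧ ¬(0 ∈ s ∧ n - 1 ∈ s)

instance (n : ℕ) : DecidablePred (okC n) := fun s => instDecidableAnd

noncomputable def FP (n : ℕ) (t : ℝ) : ℝ :=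
  ∑ s ∈ (Finset.range n).powerset.filter okP, t ^ s.card

noncomputable def FC (n : ℕ) (t : ℝ) : ℝ :=
  ∑ s ∈ (Finset.range n).powerset.filter (okC n), t ^ s.card

lemma mem_cliquesOf {V : Type*} [Finite V] (G : SimpleGraph V) (c : Finset V) :
    c ∈ cliquesOf G ↔ c.Nonempty ∧ G.IsClique (c : Set V) := by
  classical
  simp [cliquesOf]

lemma okP_mono {s t : Finset ℕ} (h : s ⊆ t) (ht : okP t) : okP s :=
  fun a ha hb => ht a (h ha) (h hb)

/-- Generic translation between cliques and a predicate on ℕ-finsets. -/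
lemma fgen_eq_sum (n : ℕ) (G : SimpleGraph (Fin n)) (P : Finset ℕ → Prop) [DecidablePred P]
    (hP : ∀ c : Finset (Fin n), G.IsClique (c : Set (Fin n)) ↔ P (c.image Fin.val))
    (hP0 : P ∅) (t : ℝ) :
    fgen G t = ∑ s ∈ (Finset.range n).powerset.filter P, t ^ s.card := by
  classical
  have hmem : ∅ ∈ (Finset.range n).powerset.filter P := by
    simp [hP0]
  rw [← Finset.add_sum_erase _ _ hmem]
  simp only [Finset.card_empty, pow_zero, fgen]
  congr 1
  refine Finset.sum_nbij' (fun c => c.image Fin.val)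
    (fun s => if h : ∀ m ∈ s, m < n then s.attachFin h else ∅) ?_ ?_ ?_ ?_ ?_
  · intro c hc
    rw [mem_cliquesOf] at hc
    rw [Finset.mem_erase, Finset.mem_filter, Finset.mem_powerset]
    refine ⟨?_, ?_, (hP c).1 hc.2⟩
    · intro h
      obtain ⟨x, hx⟩ := hc.1
      have : (x : ℕ) ∈ (∅ : Finset ℕ) := h ▸ Finset.mem_image_of_mem _ hx
      simp at this
    · intro a ha
      rw [Finset.mem_image] at ha
      obtain ⟨x, _, rfl⟩ := ha
      exact Finset.mem_range.2 x.2
  · intro s hs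
    rw [Finset.mem_erase, Finset.mem_filter, Finset.mem_powerset] at hs
    have hlt : ∀ m ∈ s, m < n := fun m hm => Finset.mem_range.1 (hs.2.1 hm)
    rw [dif_pos hlt, mem_cliquesOf]
    constructor
    · rw [← Finset.card_pos, Finset.card_attachFin, Finset.card_pos]
      exact Finset.nonempty_iff_ne_empty.2 hs.1
    · rw [hP]
      have : (s.attachFin hlt).image Fin.val = s := by
        ext a
        simp [Finset.mem_image, Finset.mem_attachFin]
      rw [this]
      exact hs.2.2
  · intro c hc
    have hlt : ∀ m ∈ c.image Fin.val, m < n := by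
      intro m hm
      rw [Finset.mem_image] at hm
      obtain ⟨x, _, rfl⟩ := hm
      exact x.2
    rw [dif_pos hlt]
    ext x
    simp [Finset.mem_attachFin, Finset.mem_image]
    constructor
    · rintro ⟨y, hy, h⟩
      rwa [← Fin.ext h]  -- maybe wrong; fix with Fin.val_injective
    · intro hx; exact ⟨x, hx, rfl⟩
  · intro s hs
    rw [Finset.mem_erase, Finset.mem_filter, Finset.mem_powerset] at hs
    have hlt : ∀ m ∈ s, m < n := fun m hm => Finset.mem_range.1 (hs.2.1 hm)
    rw [dif_pos hlt]
    ext a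
    simp [Finset.mem_image, Finset.mem_attachFin]
  · intro c hc
    rw [Finset.card_image_of_injective _ Fin.val_injective]

lemma finsub_val_one {n : ℕ} (hn : 3 ≤ n) (i j : Fin n) :
    ((i - j : Fin n).val = 1) ↔ ((j : ℕ) + 1 = i ∨ ((i : ℕ) = 0 ∧ (j : ℕ) = n - 1)) := by
  have hi := i.2; have hj := j.2
  rw [Fin.sub_def]
  simp only [Fin.val_mk]
  rcases Nat.lt_or_ge (i : ℕ) (j : ℕ) with h | h
  · have he : (n - ↑j + ↑i) % n = n - ↑j + ↑i := Nat.mod_eq_of_lt (by omega)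
    rw [he]; omega
  · have he : (n - ↑j + ↑i) % n = ↑i - ↑j := by
      have h2 : n - ↑j + ↑i = (↑i - ↑j) + 1 * n := by omega
      rw [h2, Nat.add_mul_mod_self_right, Nat.mod_eq_of_lt (by omega)]
    rw [he]; omega

lemma clique_path_iff (n : ℕ) (c : Finset (Fin n)) :
    ((pathGraph' n)ᶜ).IsClique (c : Set (Fin n)) ↔ okP (c.image Fin.val) := by
  rw [SimpleGraph.isClique_iff]
  constructor
  · intro h a ha hb
    rw [Finset.mem_image] at ha hb
    obtain ⟨x, hx, rfl⟩ := ha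
    obtain ⟨y, hy, hxy⟩ := hb
    have hne : y ≠ x := by
      intro e; rw [e] at hxy; simpa using hxy
    have hadj := h (Finset.mem_coe.2 hy) (Finset.mem_coe.2 hx) hne
    rw [SimpleGraph.compl_adj] at hadj
    exact hadj.2 (Or.inr hxy.symm)
  · intro h x hx y hy hne
    rw [SimpleGraph.compl_adj]
    refine ⟨hne, ?_⟩
    intro hadj
    have hadj' : (x : ℕ) + 1 = (y : ℕ) ∨ (y : ℕ) + 1 = (x : ℕ) := hadj
    rcases hadj' with h1 | h1
    · exact h (x : ℕ) (Finset.mem_image_of_mem _ (Finset.mem_coe.1 hx))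
        (by rw [h1]; exact Finset.mem_image_of_mem _ (Finset.mem_coe.1 hy))
    · exact h (y : ℕ) (Finset.mem_image_of_mem _ (Finset.mem_coe.1 hy))
        (by rw [h1]; exact Finset.mem_image_of_mem _ (Finset.mem_coe.1 hx))

lemma clique_cycle_iff (n : ℕ) (hn : 3 ≤ n) (c : Finset (Fin n)) :
    ((cycleGraph n)ᶜ).IsClique (c : Set (Fin n)) ↔ okC n (c.image Fin.val) := by
  rw [SimpleGraph.isClique_iff]
  constructor
  · intro h
    constructor
    · intro a ha hb
      rw [Finset.mem_image] at ha hb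
      obtain ⟨x, hx, rfl⟩ := ha
      obtain ⟨y, hy, hxy⟩ := hb
      have hne : y ≠ x := by intro e; rw [e] at hxy; simpa using hxy
      have hadj := h (Finset.mem_coe.2 hy) (Finset.mem_coe.2 hx) hne
      rw [SimpleGraph.compl_adj] at hadj
      exact hadj.2 ⟨hne, Or.inl ((finsub_val_one hn y x).2 (Or.inl hxy.symm))⟩
    · rintro ⟨h0, h1⟩
      rw [Finset.mem_image] at h0 h1
      obtain ⟨x, hx, hx0⟩ := h0
      obtain ⟨y, hy, hy1⟩ := h1
      have hne : x ≠ y := by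
        intro e; rw [e, hy1] at hx0; omega
      have hadj := h (Finset.mem_coe.2 hx) (Finset.mem_coe.2 hy) hne
      rw [SimpleGraph.compl_adj] at hadj
      exact hadj.2 ⟨hne, Or.inl ((finsub_val_one hn x y).2 (Or.inr ⟨hx0, hy1⟩))⟩
  · rintro ⟨hok, hpair⟩ x hx y hy hne
    rw [SimpleGraph.compl_adj]
    refine ⟨hne, ?_⟩
    rintro ⟨-, hadj | hadj⟩
    · rw [finsub_val_one hn] at hadj
      rcases hadj with h1 | ⟨h1, h2⟩
      · exact hok (y : ℕ) (Finset.mem_image_of_mem _ (Finset.mem_coe.1 hy))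
          (by rw [h1]; exact Finset.mem_image_of_mem _ (Finset.mem_coe.1 hx))
      · exact hpair ⟨by rw [← h1]; exact Finset.mem_image_of_mem _ (Finset.mem_coe.1 hx),
          by rw [← h2]; exact Finset.mem_image_of_mem _ (Finset.mem_coe.1 hy)⟩
    · rw [finsub_val_one hn] at hadj
      rcases hadj with h1 | ⟨h1, h2⟩
      · exact hok (x : ℕ) (Finset.mem_image_of_mem _ (Finset.mem_coe.1 hx))
          (by rw [h1]; exact Finset.mem_image_of_mem _ (Finset.mem_coe.1 hy))
      · exact hpair ⟨by rw [← h1]; exact Finset.mem_image_of_mem _ (Finset.mem_coe.1 hy),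
          by rw [← h2]; exact Finset.mem_image_of_mem _ (Finset.mem_coe.1 hx)⟩

lemma fgen_path (n : ℕ) (t : ℝ) : fgen ((pathGraph' n)ᶜ) t = FP n t :=
  fgen_eq_sum n _ okP (clique_path_iff n) (by simp [okP]) t

lemma fgen_cycle (n : ℕ) (hn : 3 ≤ n) (t : ℝ) : fgen ((cycleGraph n)ᶜ) t = FC n t :=
  fgen_eq_sum n _ (okC n) (clique_cycle_iff n hn) (by simp [okC, okP]) t

lemma FP_rec (n : ℕ) (t : ℝ) : FP (n + 2) t = FP (n + 1) t + t * FP n t := by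
  classical
  have key := Finset.sum_filter_add_sum_filter_not
    ((Finset.range (n + 2)).powerset.filter okP) (fun s => n + 1 ∈ s) (fun s => t ^ s.card)
  rw [FP, ← key, add_comm]
  congr 1
  · -- sets not containing n+1
    congr 1
    ext s
    simp only [Finset.mem_filter, Finset.mem_powerset, FP]
    constructor
    · rintro ⟨⟨hsub, hok⟩, hmem⟩
      refine ⟨fun a ha => Finset.mem_range.2 ?_, hok⟩
      have h1 := Finset.mem_range.1 (hsub ha)
      have h2 : a ≠ n + 1 := fun e => hmem (e ▸ ha)
      omega
    · rintro ⟨hsub, hok⟩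
      refine ⟨⟨fun a ha => Finset.mem_range.2 (by have := Finset.mem_range.1 (hsub ha); omega), hok⟩, ?_⟩
      intro h
      exact absurd (Finset.mem_range.1 (hsub h)) (by omega)
  · -- sets containing n+1
    rw [FP, Finset.mul_sum]
    refine Finset.sum_nbij' (fun s => s.erase (n + 1)) (fun s => insert (n + 1) s) ?_ ?_ ?_ ?_ ?_
    · intro s hs
      simp only [Finset.mem_filter, Finset.mem_powerset] at hs ⊢
      obtain ⟨⟨hsub, hok⟩, hmem⟩ := hs
      refine ⟨fun a ha => ?_, okP_mono (Finset.erase_subset _ _) hok⟩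
      rw [Finset.mem_erase] at ha
      have h1 := Finset.mem_range.1 (hsub ha.2)
      have h2 : a ≠ n := by
        intro e; subst e
        exact hok a ha.2 hmem
      exact Finset.mem_range.2 (by omega)
    · intro s hs
      simp only [Finset.mem_filter, Finset.mem_powerset] at hs ⊢
      obtain ⟨hsub, hok⟩ := hs
      have hnm : n + 1 ∉ s := fun h => absurd (Finset.mem_range.1 (hsub h)) (by omega)
      refine ⟨⟨fun a ha => ?_, fun a ha hb => ?_⟩, Finset.mem_insert_self _ _⟩
      · rw [Finset.mem_insert] at ha
        rcases ha with rfl | ha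
        · exact Finset.mem_range.2 (by omega)
        · exact Finset.mem_range.2 (by have := Finset.mem_range.1 (hsub ha); omega)
      · rw [Finset.mem_insert] at ha hb
        rcases ha with rfl | ha
        · rcases hb with hb | hb
          · omega
          · exact absurd (Finset.mem_range.1 (hsub hb)) (by omega)
        · rcases hb with hb | hb
          · have := Finset.mem_range.1 (hsub ha); omega
          · exact hok a ha hb
    · intro s hs
      simp only [Finset.mem_filter] at hs
      exact Finset.insert_erase hs.2
    · intro s hs
      simp only [Finset.mem_filter, Finset.mem_powerset] at hs
      exact Finset.erase_insert (fun h => absurd (Finset.mem_range.1 (hs.1 h)) (by omega))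
    · intro s hs
      simp only [Finset.mem_filter] at hs
      rw [Finset.card_erase_of_mem hs.2, ← pow_succ']
      congr 1
      have : 0 < s.card := Finset.card_pos.2 ⟨n + 1, hs.2⟩
      omega

lemma FP_shift (n : ℕ) (t : ℝ) :
    ∑ s ∈ (Finset.Ico 1 (n + 1)).powerset.filter okP, t ^ s.card = FP n t := by
  classical
  rw [FP]
  refine Finset.sum_nbij' (fun s => s.image (· - 1)) (fun s => s.image (· + 1)) ?_ ?_ ?_ ?_ ?_
  · intro s hs
    simp only [Finset.mem_filter, Finset.mem_powerset] at hs ⊢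
    obtain ⟨hsub, hok⟩ := hs
    have hge : ∀ a ∈ s, 1 ≤ a ∧ a < n + 1 := fun a ha => by
      have := hsub ha; rw [Finset.mem_Ico] at this; omega
    refine ⟨fun b hb => ?_, fun b hb hb1 => ?_⟩
    · rw [Finset.mem_image] at hb
      obtain ⟨a, ha, rfl⟩ := hb
      have := hge a ha
      exact Finset.mem_range.2 (by omega)
    · rw [Finset.mem_image] at hb hb1
      obtain ⟨a, ha, rfl⟩ := hb
      obtain ⟨a', ha', he⟩ := hb1
      have h1 := hge a ha
      have h2 := hge a' ha'
      have : a' = a + 1 := by omega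
      exact hok a ha (this ▸ ha')
  · intro s hs
    simp only [Finset.mem_filter, Finset.mem_powerset] at hs ⊢
    obtain ⟨hsub, hok⟩ := hs
    have hlt : ∀ a ∈ s, a < n := fun a ha => Finset.mem_range.1 (hsub ha)
    refine ⟨fun b hb => ?_, fun b hb hb1 => ?_⟩
    · rw [Finset.mem_image] at hb
      obtain ⟨a, ha, rfl⟩ := hb
      have := hlt a ha
      rw [Finset.mem_Ico]; omega
    · rw [Finset.mem_image] at hb hb1
      obtain ⟨a, ha, rfl⟩ := hb
      obtain ⟨a', ha', he⟩ := hb1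
      have : a' = a + 1 := by omega
      exact hok a ha (this ▸ ha')
  · intro s hs
    simp only [Finset.mem_filter, Finset.mem_powerset] at hs
    rw [Finset.image_image]
    ext a
    simp only [Finset.mem_image, Function.comp]
    constructor
    · rintro ⟨b, hb, he⟩
      have hb' := hs.1 hb
      rw [Finset.mem_Ico] at hb'
      have : a = b := by omega
      rwa [this]
    · intro ha
      refine ⟨a, ha, ?_⟩
      have ha' := hs.1 ha
      rw [Finset.mem_Ico] at ha'
      omega
  · intro s hs
    rw [Finset.image_image]
    ext a
    simp only [Finset.mem_image, Function.comp]
    constructor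
    · rintro ⟨b, hb, he⟩
      have : a = b := by omega
      rwa [this]
    · intro ha
      exact ⟨a, ha, by omega⟩
  · intro s hs
    simp only [Finset.mem_filter, Finset.mem_powerset] at hs
    congr 1
    rw [Finset.card_image_of_injOn]
    intro a ha b hb he
    have h1 := hs.1 ha; have h2 := hs.1 hb
    rw [Finset.mem_Ico] at h1 h2
    simp only at he
    omega

lemma FC_rec (n : ℕ) (t : ℝ) : FC (n + 3) t = FP (n + 2) t + t * FP n t := by
  classical
  have key := Finset.sum_filter_add_sum_filter_not
    ((Finset.range (n + 3)).powerset.filter (okC (n + 3))) (fun s => n + 2 ∈ s)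
    (fun s => t ^ s.card)
  rw [FC, ← key, add_comm]
  congr 1
  · -- sets not containing n+2 : equals FP (n+2)
    rw [FP]
    congr 1
    ext s
    simp only [Finset.mem_filter, Finset.mem_powerset, okC]
    constructor
    · rintro ⟨⟨hsub, hok, -⟩, hmem⟩
      refine ⟨fun a ha => ?_, hok⟩
      have h1 := Finset.mem_range.1 (hsub ha)
      have h2 : a ≠ n + 2 := fun e => hmem (e ▸ ha)
      exact Finset.mem_range.2 (by omega)
    · rintro ⟨hsub, hok⟩
      have hmem : n + 2 ∉ s := fun h => absurd (Finset.mem_range.1 (hsub h)) (by omega)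
      refine ⟨⟨fun a ha => Finset.mem_range.2 (by have := Finset.mem_range.1 (hsub ha); omega),
        hok, ?_⟩, hmem⟩
      rintro ⟨-, h⟩
      have : n + 3 - 1 = n + 2 := by omega
      exact hmem (this ▸ h)
  · -- sets containing n+2 : equals t * FP n
    rw [← FP_shift n t, Finset.mul_sum]
    refine Finset.sum_nbij' (fun s => s.erase (n + 2)) (fun s => insert (n + 2) s) ?_ ?_ ?_ ?_ ?_
    · intro s hs
      simp only [Finset.mem_filter, Finset.mem_powerset, okC] at hs ⊢
      obtain ⟨⟨hsub, hok, hpair⟩, hmem⟩ := hs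
      have h0 : 0 ∉ s := by
        intro h0
        exact hpair ⟨h0, by show n + 2 ∈ s; exact hmem⟩
      have h1 : n + 1 ∉ s := fun h => hok (n + 1) h hmem
      refine ⟨fun a ha => ?_, okP_mono (Finset.erase_subset _ _) hok⟩
      rw [Finset.mem_erase] at ha
      have := Finset.mem_range.1 (hsub ha.2)
      have ha0 : a ≠ 0 := fun e => h0 (e ▸ ha.2)
      have ha1 : a ≠ n + 1 := fun e => h1 (e ▸ ha.2)
      rw [Finset.mem_Ico]
      omega
    · intro s hs
      simp only [Finset.mem_filter, Finset.mem_powerset, okC] at hs ⊢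
      obtain ⟨hsub, hok⟩ := hs
      have hbound : ∀ a ∈ s, 1 ≤ a ∧ a < n + 1 := fun a ha => by
        have := hsub ha; rw [Finset.mem_Ico] at this; omega
      have hnm : n + 2 ∉ s := fun h => by have := hbound _ h; omega
      refine ⟨⟨fun a ha => ?_, fun a ha hb => ?_, ?_⟩, Finset.mem_insert_self _ _⟩
      · rw [Finset.mem_insert] at ha
        rcases ha with rfl | ha
        · exact Finset.mem_range.2 (by omega)
        · exact Finset.mem_range.2 (by have := hbound a ha; omega)
      · rw [Finset.mem_insert] at ha hb
        rcases ha with rfl | ha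
        · rcases hb with hb | hb
          · omega
          · have := hbound _ hb; omega
        · rcases hb with hb | hb
          · have := hbound a ha; omega
          · exact hok a ha hb
      · rintro ⟨h0, -⟩
        rw [Finset.mem_insert] at h0
        rcases h0 with h0 | h0
        · omega
        · have := hbound _ h0; omega
    · intro s hs
      simp only [Finset.mem_filter] at hs
      exact Finset.insert_erase hs.2
    · intro s hs
      simp only [Finset.mem_filter, Finset.mem_powerset] at hs
      refine Finset.erase_insert (fun h => ?_)
      have := hs.1 h; rw [Finset.mem_Ico] at this; omega
    · intro s hs
      simp only [Finset.mem_filter] at hs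
      rw [Finset.card_erase_of_mem hs.2, ← pow_succ']
      congr 1
      have : 0 < s.card := Finset.card_pos.2 ⟨n + 2, hs.2⟩
      omega

/-- The simplex generating polynomials of `G_n = (C_n)ᶜ` and `G_n^+ = (P_n)ᶜ` satisfy the
Jacobsthal recursion `f_n(t) = f_{n-1}(t) + t f_{n-2}(t)`. -/
theorem jacobsthal_recursion :
    (∀ n : ℕ, 5 ≤ n → ∀ t : ℝ,
      fgen ((cycleGraph n)ᶜ) t =
        fgen ((cycleGraph (n - 1))ᶜ) t + t * fgen ((cycleGraph (n - 2))ᶜ) t) ∧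
    (∀ n : ℕ, 3 ≤ n → ∀ t : ℝ,
      fgen ((pathGraph' n)ᶜ) t =
        fgen ((pathGraph' (n - 1))ᶜ) t + t * fgen ((pathGraph' (n - 2))ᶜ) t) := by
  constructor
  · intro n hn t
    obtain ⟨k, rfl⟩ : ∃ k, n = k + 5 := ⟨n - 5, by omega⟩
    rw [show k + 5 - 1 = k + 4 from rfl, show k + 5 - 2 = k + 3 from rfl]
    rw [fgen_cycle _ (by omega) t, fgen_cycle _ (by omega) t, fgen_cycle _ (by omega) t]
    have a1 : FC (k + 5) t = FP (k + 4) t + t * FP (k + 2) t := FC_rec (k + 2) t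
    have a2 : FC (k + 4) t = FP (k + 3) t + t * FP (k + 1) t := FC_rec (k + 1) t
    have a3 : FC (k + 3) t = FP (k + 2) t + t * FP k t := FC_rec k t
    have r1 : FP (k + 4) t = FP (k + 3) t + t * FP (k + 2) t := FP_rec (k + 2) t
    have r2 : FP (k + 2) t = FP (k + 1) t + t * FP k t := FP_rec k t
    rw [a1, a2, a3]
    linear_combination r1 + t * r2
  · intro n hn t
    obtain ⟨k, rfl⟩ : ∃ k, n = k + 3 := ⟨n - 3, by omega⟩
    rw [show k + 3 - 1 = k + 2 from rfl, show k + 3 - 2 = k + 1 from rfl]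
    rw [fgen_path, fgen_path, fgen_path]
    exact FP_rec (k + 1) t
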